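/- There exists a locally integrable μ-almost periodic function f : ℝ → ℝ such that sup_{u∈ℝ} ∫_u^{u+δ} |f(t)| dt → 0 as δ → 0⁺, yet f is not S¹-almost periodic. -/

import Mathlib

open MeasureTheory Filter Set intervalIntegral

noncomputable section

/-- A set `A ⊆ ℝ` is relatively dense. -/
def RelDense (A : Set ℝ) : Prop := ∃ l > 0, ∀ x : ℝ, ∃ τ ∈ A, x < τ ∧ τ < x + l

/-- The set over which the infimum defining the LIF firing map is taken. -/
def FiringSet (σ : ℝ) (f : ℝ → ℝ) (t : ℝ) : Set ℝ :=
  {t' | t < t' ∧ Real.exp (σ * t) ≤ ∫ u in t..t', (f u - σ) * Real.exp (σ * u)}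

/-- `y` is the firing-map value at `t`: the smallest `t' > t` with
`e^{σ t} = ∫_t^{t'} (f u - σ) e^{σ u} du`. -/
def FiringEq (σ : ℝ) (f : ℝ → ℝ) (t y : ℝ) : Prop :=
  IsLeast {t' | t < t' ∧ Real.exp (σ * t) = ∫ u in t..t', (f u - σ) * Real.exp (σ * u)} y

/-- The Stepanov `S¹` seminorm. -/
def SNorm (f : ℝ → ℝ) : ℝ := ⨆ t : ℝ, ∫ u in t..(t + 1), |f u|

/-- Stepanov `S¹`-almost periodicity. -/
def S1AP (f : ℝ → ℝ) : Prop :=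
  ∀ ε > 0, RelDense {τ | SNorm (fun u => f (u + τ) - f u) < ε}

/-- `D(η; f, g) = sup_u μ({t ∈ [u,u+1] : |f t - g t| ≥ η})`. -/
def Dfun (η : ℝ) (f g : ℝ → ℝ) : ℝ :=
  ⨆ u : ℝ, (volume {t ∈ Set.Icc u (u + 1) | η ≤ |f t - g t|}).toReal

/-- Almost periodicity in the Lebesgue measure (μ-almost periodicity). -/
def MuAP (f : ℝ → ℝ) : Prop :=
  ∀ ε > 0, ∀ η > 0, RelDense {τ | Dfun η (fun t => f (t + τ)) f ≤ ε}

/-- Bohr (uniform) almost periodicity. -/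
def BohrAP (g : ℝ → ℝ) : Prop :=
  Continuous g ∧ ∀ ε > 0, RelDense {τ | (⨆ t : ℝ, |g (t + τ) - g t|) < ε}

/-- Limit-periodicity: `g` is a uniform limit of continuous periodic functions. -/
def LimitPeriodic (g : ℝ → ℝ) : Prop :=
  ∃ gn : ℕ → ℝ → ℝ, (∀ n, Continuous (gn n) ∧ ∃ p > 0, Function.Periodic (gn n) p) ∧
    TendstoUniformly gn g atTop


namespace Stmt19Aux

/-- 2-adic valuation of an integer. -/
def nu (z : ℤ) : ℕ := padicValNat 2 z.natAbs

/-- global spike set at level `m` : spikes of width `2^{-(2m+1)}` spaced `2^{-m}`. -/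
def Spk (m : ℕ) : Set ℝ := {t | Int.fract ((2:ℝ)^m * t) < ((2:ℝ)^(m+1))⁻¹}

open Classical in
/-- the example function. -/
def f (t : ℝ) : ℝ :=
  if ⌊t⌋ ≠ 0 ∧ t ∈ Spk (nu ⌊t⌋) then 1 + 2^(nu ⌊t⌋ + 1) else 1

lemma hw (m : ℕ) : ((2:ℝ)^(2*m+1))⁻¹ * 2^m = ((2:ℝ)^(m+1))⁻¹ := by
  have h : (2:ℝ)^(2*m+1) = 2^(m+1) * 2^m := by rw [← pow_add]; congr 1; omega
  rw [h, mul_inv, mul_assoc, inv_mul_cancel₀ (by positivity), mul_one]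

lemma Spk_eq (m : ℕ) :
    Spk m = ⋃ k : ℤ, Ico ((k:ℝ)/2^m) ((k:ℝ)/2^m + ((2:ℝ)^(2*m+1))⁻¹) := by
  have h2m : (0:ℝ) < 2^m := by positivity
  ext t
  simp only [Spk, mem_setOf_eq, mem_iUnion, mem_Ico]
  constructor
  · intro h
    refine ⟨⌊(2:ℝ)^m * t⌋, ?_, ?_⟩
    · rw [div_le_iff₀ h2m, mul_comm t]
      exact Int.floor_le _
    · have h1 : (2:ℝ)^m * t < ⌊(2:ℝ)^m * t⌋ + ((2:ℝ)^(m+1))⁻¹ := by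
        have := h; unfold Int.fract at this; linarith
      rw [← hw m] at h1
      have h' : t < ((⌊(2:ℝ)^m * t⌋:ℝ) + ((2:ℝ)^(2*m+1))⁻¹ * 2^m) / 2^m := by
        rw [lt_div_iff₀ h2m, mul_comm]; exact h1
      calc t < ((⌊(2:ℝ)^m * t⌋:ℝ) + ((2:ℝ)^(2*m+1))⁻¹ * 2^m) / 2^m := h'
        _ = (⌊(2:ℝ)^m * t⌋:ℝ)/2^m + ((2:ℝ)^(2*m+1))⁻¹ := by field_simp
  · rintro ⟨k, hk1, hk2⟩
    have hk1' : (k:ℝ) ≤ 2^m * t := by rwa [div_le_iff₀ h2m, mul_comm t] at hk1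
    have hk2' : 2^m * t < (k:ℝ) + ((2:ℝ)^(m+1))⁻¹ := by
      have h3 := mul_lt_mul_of_pos_right hk2 h2m
      calc (2:ℝ)^m * t = t * 2^m := by ring
        _ < ((k:ℝ)/2^m + ((2:ℝ)^(2*m+1))⁻¹) * 2^m := h3
        _ = (k:ℝ) + ((2:ℝ)^(2*m+1))⁻¹ * 2^m := by field_simp
        _ = (k:ℝ) + ((2:ℝ)^(m+1))⁻¹ := by rw [hw]
    have hfl : ⌊(2:ℝ)^m * t⌋ = k := by
      apply Int.floor_eq_iff.2
      constructor
      · exact hk1'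
      · have : ((2:ℝ)^(m+1))⁻¹ ≤ 1 := by
          rw [inv_le_one_iff₀]; right; exact one_le_pow₀ (by norm_num)
        linarith
    unfold Int.fract
    rw [hfl]; linarith

lemma measurableSet_Spk (m : ℕ) : MeasurableSet (Spk m) := by
  rw [Spk_eq]
  exact MeasurableSet.iUnion fun k => measurableSet_Ico

lemma measurable_f : Measurable f := by
  classical
  have hfl : Measurable (fun t : ℝ => (t, ⌊t⌋)) :=
    measurable_id.prodMk Int.measurable_floor
  have hG : Measurable (fun p : ℝ × ℤ =>
      if p.2 ≠ 0 ∧ p.1 ∈ Spk (nu p.2) then (1 + 2^(nu p.2 + 1) : ℝ) else 1) := by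
    apply measurable_from_prod_countable_left
    intro z
    by_cases hz : z = 0
    · simp [hz]
    · simp only [hz, ne_eq, not_false_eq_true, true_and]
      exact Measurable.ite (measurableSet_Spk (nu z)) measurable_const measurable_const
  have heq : f = (fun p : ℝ × ℤ =>
      if p.2 ≠ 0 ∧ p.1 ∈ Spk (nu p.2) then (1 + 2^(nu p.2 + 1) : ℝ) else 1) ∘
      (fun t : ℝ => (t, ⌊t⌋)) := by
    funext t; simp [f, Function.comp]
  rw [heq]
  exact hG.comp hfl

lemma one_le_f (t : ℝ) : 1 ≤ f t := by
  unfold f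
  split
  · have : (0:ℝ) ≤ 2^(nu ⌊t⌋ + 1) := by positivity
    linarith
  · exact le_refl 1

lemma f_nonneg (t : ℝ) : 0 ≤ f t := le_trans zero_le_one (one_le_f t)


def hgt (z : ℤ) : ℝ := if z = 0 then 0 else 2^(nu z + 1)
lemma width_le_spacing (m : ℕ) : ((2:ℝ)^(2*m+1))⁻¹ ≤ ((2:ℝ)^m)⁻¹ := by
  apply inv_anti₀ (by positivity)
  apply pow_le_pow_right₀ (by norm_num); omega

-- ## valuation lemmas

lemma two_pow_dvd_iff {a : ℤ} (ha : a ≠ 0) (k : ℕ) : (2:ℤ)^k ∣ a ↔ k ≤ nu a := by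
  have h1 : (2:ℤ)^k ∣ a ↔ 2^k ∣ a.natAbs := by
    rw [← Int.natAbs_dvd_natAbs]
    congr! 1
  rw [h1, nu, padicValNat_dvd_iff]
  simp [Int.natAbs_ne_zero.2 ha]

lemma nu_pow (k : ℕ) : nu ((2:ℤ)^k) = k := by
  unfold nu
  rw [Int.natAbs_pow]
  show padicValNat 2 (2^k) = k
  exact padicValNat.prime_pow k

lemma nu_add {a : ℤ} (ha : a ≠ 0) {N : ℕ} (hN : nu a < N) {c : ℤ} (hc : (2:ℤ)^N ∣ c) :
    a + c ≠ 0 ∧ nu (a + c) = nu a := by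
  have h1 : (2:ℤ)^(nu a) ∣ a := (two_pow_dvd_iff ha _).2 le_rfl
  have h2 : ¬ (2:ℤ)^(nu a + 1) ∣ a := by
    intro h
    have := (two_pow_dvd_iff ha _).1 h
    omega
  have hc2 : (2:ℤ)^(nu a + 1) ∣ c := dvd_trans (pow_dvd_pow 2 (by omega)) hc
  have hc1 : (2:ℤ)^(nu a) ∣ c := dvd_trans (pow_dvd_pow 2 (by omega)) hc
  have hb : a + c ≠ 0 := by
    intro h
    have ha' : a = -c := by linarith
    have hd : (2:ℤ)^(nu a + 1) ∣ -c := dvd_neg.2 hc2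
    rw [← ha'] at hd
    exact h2 hd
  refine ⟨hb, le_antisymm ?_ ?_⟩
  · by_contra h
    push_neg at h
    have hd : (2:ℤ)^(nu a + 1) ∣ a + c := (two_pow_dvd_iff hb _).2 (by omega)
    apply h2
    have : (2:ℤ)^(nu a+1) ∣ (a + c) - c := Dvd.dvd.sub hd hc2
    simpa using this
  · exact (two_pow_dvd_iff hb _).1 (Dvd.dvd.add h1 hc1)

-- ## exact measure of spikes in a cluster

lemma Spk_inter_Ico (m : ℕ) (z : ℤ) :
    Spk m ∩ Ico (z:ℝ) (z+1) =
      ⋃ i ∈ Finset.Ico (0:ℤ) (2^m), Ico ((z:ℝ) + (i:ℝ)/2^m)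
        ((z:ℝ) + (i:ℝ)/2^m + ((2:ℝ)^(2*m+1))⁻¹) := by
  have h2m : (0:ℝ) < 2^m := by positivity
  set w : ℝ := ((2:ℝ)^(2*m+1))⁻¹ with hwdef
  have hw0 : 0 < w := by positivity
  have hwsp : w ≤ ((2:ℝ)^m)⁻¹ := width_le_spacing m
  have hwm : w * 2^m = ((2:ℝ)^(m+1))⁻¹ := hw m
  have hwm1 : w * 2^m ≤ 1 := by
    rw [hwm, inv_le_one_iff₀]; right; exact one_le_pow₀ (by norm_num)
  ext t
  simp only [Spk_eq, mem_inter_iff, mem_iUnion, mem_Ico, Finset.mem_Ico]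
  constructor
  · rintro ⟨⟨k, hk1, hk2⟩, hz1, hz2⟩
    have hklo : z * 2^m ≤ k := by
      have h1 : (z:ℝ) < (k:ℝ)/2^m + w := lt_of_le_of_lt hz1 hk2
      have h2 : (z:ℝ) * 2^m < (k:ℝ) + w * 2^m := by
        calc (z:ℝ) * 2^m < ((k:ℝ)/2^m + w) * 2^m := mul_lt_mul_of_pos_right h1 h2m
          _ = (k:ℝ) + w * 2^m := by field_simp
      have h3 : ((z * 2^m : ℤ):ℝ) < ((k + 1 : ℤ):ℝ) := by push_cast; linarith
      have h4 : (z * 2^m : ℤ) < k + 1 := by exact_mod_cast h3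
      omega
    have hkhi : k < z * 2^m + 2^m := by
      have h1 : (k:ℝ)/2^m < (z:ℝ) + 1 := lt_of_le_of_lt hk1 hz2
      have h2 : (k:ℝ) < ((z:ℝ) + 1) * 2^m := by
        rw [div_lt_iff₀ h2m] at h1; linarith
      have h3 : ((k:ℤ):ℝ) < ((z * 2^m + 2^m : ℤ):ℝ) := by push_cast; linarith
      exact_mod_cast h3
    have hcast : (z:ℝ) + ((k - z * 2^m : ℤ):ℝ)/2^m = (k:ℝ)/2^m := by
      push_cast; field_simp; ring
    exact ⟨k - z * 2^m, ⟨by omega, by omega⟩, by rw [hcast]; exact hk1,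
      by rw [hcast]; exact hk2⟩
  · rintro ⟨i, ⟨hi0, hi1⟩, h1, h2⟩
    have hcast : ((z * 2^m + i : ℤ):ℝ)/2^m = (z:ℝ) + (i:ℝ)/2^m := by
      push_cast; field_simp
    have hi0' : (0:ℝ) ≤ (i:ℝ) := by exact_mod_cast hi0
    have hi1' : (i:ℝ) ≤ (2:ℝ)^m - 1 := by
      have : ((i:ℤ):ℝ) ≤ ((2^m - 1 : ℤ):ℝ) := by exact_mod_cast (by omega : (i:ℤ) ≤ 2^m - 1)
      push_cast at this; linarith
    refine ⟨⟨z * 2^m + i, by rw [hcast]; exact h1, by rw [hcast]; exact h2⟩, ?_, ?_⟩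
    · have : (0:ℝ) ≤ (i:ℝ)/2^m := by positivity
      linarith
    · have h5 : (i:ℝ)/2^m + w ≤ 1 := by
        have h6 : (i:ℝ)/2^m ≤ 1 - ((2:ℝ)^m)⁻¹ := by
          rw [div_le_iff₀ h2m]
          have : (1 - ((2:ℝ)^m)⁻¹) * 2^m = 2^m - 1 := by field_simp
          rw [this]; exact hi1'
        linarith
      linarith

lemma vol_Spk_Ico (m : ℕ) (z : ℤ) :
    volume (Spk m ∩ Ico (z:ℝ) (z+1)) = ENNReal.ofReal (((2:ℝ)^(m+1))⁻¹) := by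
  have h2m : (0:ℝ) < 2^m := by positivity
  set w : ℝ := ((2:ℝ)^(2*m+1))⁻¹ with hwdef
  have hw0 : 0 < w := by positivity
  have hwsp : w ≤ ((2:ℝ)^m)⁻¹ := width_le_spacing m
  have hmono : ∀ i j : ℤ, i < j → (i:ℝ)/2^m + w ≤ (j:ℝ)/2^m := by
    intro i j hij
    have h1 : (i:ℝ) + 1 ≤ (j:ℝ) := by exact_mod_cast hij
    have h2 : ((i:ℝ) + 1)/2^m ≤ (j:ℝ)/2^m := by gcongr
    have h3 : (i:ℝ)/2^m + ((2:ℝ)^m)⁻¹ = ((i:ℝ)+1)/2^m := by field_simp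
    linarith
  have hdisj : (↑(Finset.Ico (0:ℤ) (2^m)) : Set ℤ).PairwiseDisjoint
      (fun i : ℤ => Ico ((z:ℝ) + (i:ℝ)/2^m) ((z:ℝ) + (i:ℝ)/2^m + w)) := by
    intro i hi j hj hij
    rw [Function.onFun, Set.Ico_disjoint_Ico]
    rcases lt_or_gt_of_ne hij with h | h
    · have := hmono i j h
      refine le_trans (min_le_left _ _) (le_trans ?_ (le_max_right _ _))
      linarith
    · have := hmono j i h
      refine le_trans (min_le_right _ _) (le_trans ?_ (le_max_left _ _))
      linarith
  rw [Spk_inter_Ico]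
  rw [measure_biUnion_finset hdisj (fun i _ => measurableSet_Ico)]
  have hsum : ∀ i ∈ Finset.Ico (0:ℤ) (2^m),
      volume (Ico ((z:ℝ) + (i:ℝ)/2^m) ((z:ℝ) + (i:ℝ)/2^m + w)) = ENNReal.ofReal w := by
    intro i _
    rw [Real.volume_Ico]
    congr 1; ring
  rw [Finset.sum_congr rfl hsum, Finset.sum_const, Int.card_Ico, nsmul_eq_mul]
  have hcard : (((2^m - 0 : ℤ).toNat : ℕ) : ENNReal) = ENNReal.ofReal ((2:ℝ)^m) := by
    rw [show ((2:ℤ)^m - 0) = ((2^m : ℕ) : ℤ) by push_cast; ring, Int.toNat_natCast,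
      ← ENNReal.ofReal_natCast]
    congr 1; push_cast; ring
  rw [hcard, ← ENNReal.ofReal_mul (by positivity), mul_comm, hw m]

lemma vol_Spk_Ioc (m : ℕ) {a b : ℝ} (hab : a ≤ b) :
    volume (Spk m ∩ Ioc a b) ≤
      ENNReal.ofReal ((b-a) * ((2:ℝ)^(m+1))⁻¹ + 2 * ((2:ℝ)^(2*m+1))⁻¹) := by
  have h2m : (0:ℝ) < 2^m := by positivity
  set w : ℝ := ((2:ℝ)^(2*m+1))⁻¹ with hwdef
  have hw0 : 0 < w := by positivity
  have hwm : w * 2^m = ((2:ℝ)^(m+1))⁻¹ := hw m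
  have hwm1 : w * 2^m ≤ 1 := by
    rw [hwm, inv_le_one_iff₀]; right; exact one_le_pow₀ (by norm_num)
  set k₁ : ℤ := ⌈(a - w) * 2^m⌉ with hk₁
  set k₂ : ℤ := ⌊b * 2^m⌋ with hk₂
  have hcover : Spk m ∩ Ioc a b ⊆
      ⋃ k ∈ Finset.Icc k₁ k₂, Ico ((k:ℝ)/2^m) ((k:ℝ)/2^m + w) := by
    intro t ht
    obtain ⟨hsp, hab'⟩ := ht
    rw [Spk_eq, mem_iUnion] at hsp
    obtain ⟨k, hk⟩ := hsp
    rw [mem_Ico] at hk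
    simp only [mem_iUnion, mem_Ico]
    refine ⟨k, ?_, hk.1, hk.2⟩
    rw [Finset.mem_Icc]
    constructor
    · apply Int.ceil_le.2
      have h1 : a - w < (k:ℝ)/2^m := by
        have := lt_trans hab'.1 hk.2; linarith
      have h2 : (a - w) * 2^m < (k:ℝ) := by
        rw [← lt_div_iff₀ h2m]; exact h1
      linarith
    · apply Int.le_floor.2
      have h1 : (k:ℝ)/2^m ≤ b := le_trans hk.1 hab'.2
      rw [div_le_iff₀ h2m] at h1
      exact h1
  calc volume (Spk m ∩ Ioc a b)
      ≤ volume (⋃ k ∈ Finset.Icc k₁ k₂, Ico ((k:ℝ)/2^m) ((k:ℝ)/2^m + w)) :=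
        measure_mono hcover
    _ ≤ ∑ k ∈ Finset.Icc k₁ k₂, volume (Ico ((k:ℝ)/2^m) ((k:ℝ)/2^m + w)) :=
        measure_biUnion_finset_le _ _
    _ = (Finset.Icc k₁ k₂).card • ENNReal.ofReal w := by
        rw [Finset.sum_congr rfl (fun k _ => by rw [Real.volume_Ico, add_sub_cancel_left]),
          Finset.sum_const]
    _ ≤ ENNReal.ofReal ((b-a) * ((2:ℝ)^(m+1))⁻¹ + 2 * w) := by
        rw [nsmul_eq_mul, ← ENNReal.ofReal_natCast, ← ENNReal.ofReal_mul (Nat.cast_nonneg _)]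
        apply ENNReal.ofReal_le_ofReal
        have hcard : ((Finset.Icc k₁ k₂).card : ℝ) ≤ (b - a) * 2^m + w * 2^m + 1 := by
          rw [Int.card_Icc]
          have hR : (0:ℝ) ≤ (b - a) * 2^m + w * 2^m + 1 := by
            have e1 : (0:ℝ) ≤ (b - a) * 2^m := mul_nonneg (sub_nonneg.2 hab) h2m.le
            have e2 : (0:ℝ) < w * 2^m := mul_pos hw0 h2m
            linarith
          rcases le_or_gt (k₂ + 1 - k₁) 0 with h | h
          · rw [Int.toNat_of_nonpos h]; simpa using hR
          · have h0 : (((k₂ + 1 - k₁).toNat : ℤ)) = k₂ + 1 - k₁ := Int.toNat_of_nonneg (by omega)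
            have h0' : (((k₂ + 1 - k₁).toNat : ℕ) : ℝ) = (k₂:ℝ) + 1 - (k₁:ℝ) := by
              exact_mod_cast congrArg (Int.cast : ℤ → ℝ) h0
            rw [h0']
            have h1 : (k₂:ℝ) ≤ b * 2^m := Int.floor_le _
            have h2 : (a - w) * 2^m ≤ (k₁:ℝ) := Int.le_ceil _
            have h3 : (k₂:ℝ) + 1 - k₁ ≤ b * 2^m + 1 - (a - w) * 2^m := by linarith
            calc (k₂:ℝ) + 1 - k₁ ≤ b * 2^m + 1 - (a - w) * 2^m := h3
              _ = (b - a) * 2^m + w * 2^m + 1 := by ring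
        calc ((Finset.Icc k₁ k₂).card : ℝ) * w ≤ ((b - a) * 2^m + w * 2^m + 1) * w := by
              apply mul_le_mul_of_nonneg_right hcard hw0.le
          _ = (b - a) * (w * 2^m) + (w * 2^m) * w + w := by ring
          _ ≤ (b - a) * ((2:ℝ)^(m+1))⁻¹ + 2 * w := by
              rw [hwm]
              have : ((2:ℝ)^(m+1))⁻¹ * w ≤ 1 * w := by
                apply mul_le_mul_of_nonneg_right _ hw0.le
                rw [inv_le_one_iff₀]; right; exact one_le_pow₀ (by norm_num)
              linarith

lemma floor_eq_self_int (z : ℤ) {t : ℝ} (ht : t ∈ Ico (z:ℝ) (z+1)) : ⌊t⌋ = z := by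
  rw [Int.floor_eq_iff]
  exact ⟨ht.1, by exact_mod_cast ht.2⟩

lemma f_eqOn (z : ℤ) :
    EqOn f (fun t => 1 + Set.indicator (Spk (nu z)) (fun _ => hgt z) t)
      (Ico (z:ℝ) (z+1)) := by
  intro t ht
  have hfl : ⌊t⌋ = z := floor_eq_self_int z ht
  unfold f hgt
  rw [hfl]
  by_cases hz : z = 0
  · simp [hz, Set.indicator]
  · by_cases hsp : t ∈ Spk (nu z)
    · simp [hz, hsp, Set.indicator]
    · simp [hz, hsp, Set.indicator]

lemma f_le_of_floor {t : ℝ} : f t ≤ 1 + 2^(nu ⌊t⌋ + 1) := by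
  unfold f
  split
  · exact le_refl _
  · have : (0:ℝ) ≤ 2^(nu ⌊t⌋ + 1) := by positivity
    linarith

lemma integrableOn_f_Ico (z : ℤ) : IntegrableOn f (Ico (z:ℝ) (z+1)) volume := by
  apply Integrable.mono' (g := fun _ => 1 + 2^(nu z + 1))
  · exact integrableOn_const (by rw [Real.volume_Ico]; exact ENNReal.ofReal_ne_top)
  · exact measurable_f.aestronglyMeasurable.restrict
  · rw [ae_restrict_iff' measurableSet_Ico]
    apply Filter.Eventually.of_forall
    intro t ht
    rw [Real.norm_eq_abs, abs_of_nonneg (f_nonneg t)]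
    have := f_le_of_floor (t := t)
    rwa [floor_eq_self_int z ht] at this

lemma integrableOn_f_Icc (a b : ℝ) : IntegrableOn f (Icc a b) volume := by
  have hsub : Icc a b ⊆ ⋃ z ∈ Finset.Icc ⌊a⌋ ⌊b⌋, Ico (z:ℝ) (z+1) := by
    intro t ht
    simp only [mem_iUnion, Finset.mem_Icc]
    exact ⟨⌊t⌋, ⟨Int.floor_le_floor ht.1, Int.floor_le_floor ht.2⟩,
      Int.floor_le t, Int.lt_floor_add_one t⟩
  apply IntegrableOn.mono_set _ hsub
  rw [integrableOn_finset_iUnion]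
  exact fun z _ => integrableOn_f_Ico z

lemma locallyIntegrable_f : LocallyIntegrable f volume := by
  rw [locallyIntegrable_iff]
  intro k hk
  obtain ⟨r, hr⟩ := hk.isBounded.subset_closedBall 0
  apply IntegrableOn.mono_set (integrableOn_f_Icc (-r) r)
  intro x hx
  have := hr hx
  rw [Real.closedBall_eq_Icc] at this
  simpa using this

lemma intervalIntegrable_f (a b : ℝ) : IntervalIntegrable f volume a b := by
  rw [intervalIntegrable_iff]
  exact (integrableOn_f_Icc (min a b) (max a b)).mono_set Ioc_subset_Icc_self

lemma intervalIntegrable_f_shift (τ a b : ℝ) :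
    IntervalIntegrable (fun u => f (u + τ)) volume a b := by
  have h := (intervalIntegrable_f (a + τ) (b + τ)).comp_add_right τ
  simpa using h

lemma int_Ico_f (z : ℤ) : ∫ t in Ico (z:ℝ) (z+1), f t = 1 + hgt z * ((2:ℝ)^(nu z+1))⁻¹ := by
  rw [setIntegral_congr_fun measurableSet_Ico (f_eqOn z)]
  have h1 : IntegrableOn (fun _ : ℝ => (1:ℝ)) (Ico (z:ℝ) (z+1)) volume := by
    exact integrableOn_const (by rw [Real.volume_Ico]; exact ENNReal.ofReal_ne_top)
  have h2 : IntegrableOn (Set.indicator (Spk (nu z)) (fun _ => hgt z))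
      (Ico (z:ℝ) (z+1)) volume := by
    apply Integrable.mono' (g := fun _ => |hgt z|)
    · exact integrableOn_const (by rw [Real.volume_Ico]; exact ENNReal.ofReal_ne_top)
    · exact (measurable_const.indicator (measurableSet_Spk (nu z))).aestronglyMeasurable.restrict
    · apply Filter.Eventually.of_forall
      intro t
      rw [Real.norm_eq_abs]
      by_cases h : t ∈ Spk (nu z)
      · simp [Set.indicator_of_mem, h]
      · simp [Set.indicator_of_notMem, h, abs_nonneg]
  rw [integral_add h1 h2, setIntegral_const, setIntegral_indicator (measurableSet_Spk (nu z)),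
    setIntegral_const, inter_comm, measureReal_def, measureReal_def, vol_Spk_Ico, Real.volume_Ico]
  rw [ENNReal.toReal_ofReal (by linarith : (0:ℝ) ≤ (z:ℝ) + 1 - z),
    ENNReal.toReal_ofReal (by positivity : (0:ℝ) ≤ ((2:ℝ)^(nu z+1))⁻¹)]
  simp [mul_comm]

lemma int_Ico_f_le (z : ℤ) : ∫ t in Ico (z:ℝ) (z+1), f t ≤ 2 := by
  rw [int_Ico_f]
  unfold hgt
  by_cases hz : z = 0
  · simp [hz]
  · rw [if_neg hz, mul_inv_cancel₀ (by positivity)]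
    norm_num

lemma int_Ioc_f_le (z : ℤ) : ∫ t in Ioc (z:ℝ) (z+1), f t ≤ 2 := by
  rw [integral_Ioc_eq_integral_Ioo, ← integral_Ico_eq_integral_Ioo]
  exact int_Ico_f_le z

lemma unit4 (a : ℝ) : ∫ t in a..(a+1), |f t| ≤ 4 := by
  have habs : ∀ t, |f t| = f t := fun t => abs_of_nonneg (f_nonneg t)
  simp only [habs]
  have h1 : ∫ t in a..(a+1), f t ≤ ∫ t in (⌊a⌋:ℝ)..((⌊a⌋:ℝ)+2), f t := by
    apply integral_mono_interval (Int.floor_le a) (by linarith) ?_ ?_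
      (intervalIntegrable_f _ _)
    · have := Int.lt_floor_add_one a; linarith
    · exact Filter.Eventually.of_forall fun t => f_nonneg t
  have h2 : ∫ t in (⌊a⌋:ℝ)..((⌊a⌋:ℝ)+2), f t =
      (∫ t in Ioc (⌊a⌋:ℝ) ((⌊a⌋:ℝ)+1), f t) + ∫ t in Ioc ((⌊a⌋:ℝ)+1) ((⌊a⌋:ℝ)+2), f t := by
    rw [← integral_add_adjacent_intervals (b := (⌊a⌋:ℝ)+1)
      (intervalIntegrable_f _ _) (intervalIntegrable_f _ _)]
    rw [integral_of_le (by linarith), integral_of_le (by linarith)]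
  have h3 : ∫ t in Ioc ((⌊a⌋:ℝ)+1) ((⌊a⌋:ℝ)+2), f t ≤ 2 := by
    have := int_Ioc_f_le (⌊a⌋ + 1)
    push_cast at this
    convert this using 3 <;> ring
  have h4 := int_Ioc_f_le ⌊a⌋
  linarith

lemma unit4_shift (τ a : ℝ) : ∫ t in a..(a+1), |f (t + τ)| ≤ 4 := by
  rw [intervalIntegral.integral_comp_add_right (fun u => |f u|) τ]
  have := unit4 (a + τ)
  convert this using 2
  ring

lemma Mbound (τ t : ℝ) : ∫ u in t..(t+1), |f (u + τ) - f u| ≤ 8 := by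
  have hint1 : IntervalIntegrable (fun u => f (u + τ)) volume t (t+1) :=
    intervalIntegrable_f_shift τ t (t+1)
  have hint2 := intervalIntegrable_f t (t+1)
  have hle : ∀ u, |f (u + τ) - f u| ≤ |f (u + τ)| + |f u| := fun u => abs_sub _ _
  have h1 : ∫ u in t..(t+1), |f (u + τ) - f u| ≤
      ∫ u in t..(t+1), (|f (u + τ)| + |f u|) := by
    apply integral_mono_on (by linarith) ((hint1.sub hint2).abs) (hint1.abs.add hint2.abs)
    intro u _
    exact hle u
  have h2 : ∫ u in t..(t+1), (|f (u + τ)| + |f u|) =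
      (∫ u in t..(t+1), |f (u + τ)|) + ∫ u in t..(t+1), |f u| :=
    integral_add hint1.abs hint2.abs
  have := unit4_shift τ t
  have := unit4 t
  linarith

lemma hgt_nonneg (z : ℤ) : 0 ≤ hgt z := by
  unfold hgt; split
  · exact le_refl 0
  · positivity

lemma hgt_le (z : ℤ) : hgt z ≤ 2^(nu z + 1) := by
  unfold hgt; split
  · positivity
  · exact le_refl _

lemma min_le_sqrt {x y : ℝ} (hx : 0 ≤ x) (hy : 0 ≤ y) : min x y ≤ Real.sqrt (x*y) := by
  have h0 : 0 ≤ min x y := le_min hx hy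
  have hsq : (min x y)^2 ≤ x * y := by
    have h1 := min_le_left x y
    have h2 := min_le_right x y
    nlinarith
  nlinarith [Real.sq_sqrt (mul_nonneg hx hy), Real.sqrt_nonneg (x*y)]

lemma int_inter_f {s : Set ℝ} (hs : MeasurableSet s) (hfin : volume s < ⊤) (y : ℤ)
    (hsub : s ⊆ Ico (y:ℝ) (y+1)) :
    ∫ t in s, f t = (volume s).toReal + hgt y * (volume (s ∩ Spk (nu y))).toReal := by
  rw [setIntegral_congr_fun hs ((f_eqOn y).mono hsub)]
  have h1 : IntegrableOn (fun _ : ℝ => (1:ℝ)) s volume :=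
    integrableOn_const hfin.ne
  have h2 : IntegrableOn (Set.indicator (Spk (nu y)) (fun _ => hgt y)) s volume := by
    apply Integrable.mono' (g := fun _ => |hgt y|)
    · exact integrableOn_const hfin.ne
    · exact (measurable_const.indicator (measurableSet_Spk (nu y))).aestronglyMeasurable.restrict
    · apply Filter.Eventually.of_forall
      intro t
      rw [Real.norm_eq_abs]
      by_cases h : t ∈ Spk (nu y)
      · simp [Set.indicator_of_mem, h]
      · simp [Set.indicator_of_notMem, h, abs_nonneg]
  rw [integral_add h1 h2, setIntegral_const, setIntegral_indicator (measurableSet_Spk (nu y)),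
    setIntegral_const]
  simp [mul_comm]
  rfl

lemma piece_bound {u δ : ℝ} (hδ : 0 < δ) (hδ1 : δ ≤ 1) (y : ℤ) :
    ∫ t in (Ioc u (u+δ) ∩ Ico (y:ℝ) (y+1)), f t ≤
      (volume (Ioc u (u+δ) ∩ Ico (y:ℝ) (y+1))).toReal + (δ + 2*Real.sqrt δ) := by
  set m := nu y with hm
  set s := Ioc u (u+δ) ∩ Ico (y:ℝ) (y+1) with hsdef
  have hs : MeasurableSet s := measurableSet_Ioc.inter measurableSet_Ico
  have hfin : volume s < ⊤ := by
    apply lt_of_le_of_lt (measure_mono inter_subset_left)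
    rw [Real.volume_Ioc]
    exact ENNReal.ofReal_lt_top
  rw [int_inter_f hs hfin y inter_subset_right]
  have key : hgt y * (volume (s ∩ Spk m)).toReal ≤ δ + 2*Real.sqrt δ := by
    set r := (volume (s ∩ Spk m)).toReal with hr
    have hr0 : 0 ≤ r := ENNReal.toReal_nonneg
    have hrδ : r ≤ δ := by
      apply ENNReal.toReal_le_of_le_ofReal hδ.le
      apply le_trans (measure_mono (fun t ht => ht.1.1))
      rw [Real.volume_Ioc]
      apply ENNReal.ofReal_le_ofReal; linarith
    have hrS : r ≤ δ * ((2:ℝ)^(m+1))⁻¹ + 2 * ((2:ℝ)^(2*m+1))⁻¹ := by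
      apply ENNReal.toReal_le_of_le_ofReal (by positivity)
      apply le_trans (measure_mono (show s ∩ Spk m ⊆ Spk m ∩ Ioc u (u+δ) from
        fun t ht => ⟨ht.2, ht.1.1⟩))
      apply le_trans (vol_Spk_Ioc m (by linarith : u ≤ u + δ))
      apply ENNReal.ofReal_le_ofReal
      have : u + δ - u = δ := by ring
      rw [this]
    have hT : hgt y * r ≤ 2^(m+1) * r :=
      mul_le_mul_of_nonneg_right (hgt_le y) hr0
    have hb1 : (2:ℝ)^(m+1) * r ≤ 2^(m+1) * δ :=
      mul_le_mul_of_nonneg_left hrδ (by positivity)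
    have hpow : (2:ℝ)^(m+1) * ((2:ℝ)^(2*m+1))⁻¹ = ((2:ℝ)^m)⁻¹ := by
      have h : (2:ℝ)^(2*m+1) = 2^(m+1) * 2^m := by rw [← pow_add]; congr 1; omega
      rw [h, mul_inv]
      rw [← mul_assoc, mul_inv_cancel₀ (by positivity), one_mul]
    have hb2 : (2:ℝ)^(m+1) * r ≤ δ + 2 * ((2:ℝ)^m)⁻¹ := by
      have := mul_le_mul_of_nonneg_left hrS (by positivity : (0:ℝ) ≤ 2^(m+1))
      calc (2:ℝ)^(m+1) * r ≤ 2^(m+1) * (δ * ((2:ℝ)^(m+1))⁻¹ + 2 * ((2:ℝ)^(2*m+1))⁻¹) := this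
        _ = δ * (2^(m+1) * ((2:ℝ)^(m+1))⁻¹) + 2 * ((2:ℝ)^(m+1) * ((2:ℝ)^(2*m+1))⁻¹) := by ring
        _ = δ + 2 * ((2:ℝ)^m)⁻¹ := by
            rw [mul_inv_cancel₀ (by positivity), hpow, mul_one]
    -- min argument
    have hmin : min ((2:ℝ)^(m+1) * δ) (2 * ((2:ℝ)^m)⁻¹) ≤ 2 * Real.sqrt δ := by
      have hprod : ((2:ℝ)^(m+1) * δ) * (2 * ((2:ℝ)^m)⁻¹) = 4 * δ := by
        have : (2:ℝ)^(m+1) = 2 * 2^m := by rw [pow_succ]; ring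
        rw [this]
        field_simp
        ring
      have h1 : min ((2:ℝ)^(m+1) * δ) (2 * ((2:ℝ)^m)⁻¹) ≤ Real.sqrt (4 * δ) := by
        rw [← hprod]
        exact min_le_sqrt (by positivity) (by positivity)
      have h2 : Real.sqrt (4 * δ) = 2 * Real.sqrt δ := by
        rw [show (4:ℝ) * δ = 2^2 * δ by norm_num, Real.sqrt_mul (by positivity),
          Real.sqrt_sq (by norm_num)]
      linarith
    rcases le_total ((2:ℝ)^(m+1) * δ) (2 * ((2:ℝ)^m)⁻¹) with h | h
    · have := min_eq_left h ▸ hmin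
      calc hgt y * r ≤ 2^(m+1) * r := hT
        _ ≤ 2^(m+1) * δ := hb1
        _ ≤ 2 * Real.sqrt δ := by rw [min_eq_left h] at hmin; exact hmin
        _ ≤ δ + 2 * Real.sqrt δ := by linarith
    · calc hgt y * r ≤ 2^(m+1) * r := hT
        _ ≤ δ + 2 * ((2:ℝ)^m)⁻¹ := hb2
        _ ≤ δ + 2 * Real.sqrt δ := by
            rw [min_eq_right h] at hmin; linarith
  linarith

lemma mass_window {δ : ℝ} (hδ : 0 < δ) (hδ1 : δ ≤ 1) (u : ℝ) :
    ∫ t in u..(u+δ), f t ≤ 3*δ + 4*Real.sqrt δ := by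
  set z := ⌊u⌋ with hz
  set A := Ioc u (u+δ) with hA
  set s₁ := A ∩ Ico (z:ℝ) (z+1) with hs₁
  set s₂ := A ∩ Ico ((z+1:ℤ):ℝ) ((z+1:ℤ)+1) with hs₂
  have hcast : ((z+1:ℤ):ℝ) = (z:ℝ) + 1 := by push_cast; ring
  have hsub : A ⊆ Ico (z:ℝ) ((z:ℝ)+2) := by
    intro t ht
    constructor
    · exact le_trans (Int.floor_le u) ht.1.le
    · have h1 : u < (z:ℝ)+1 := Int.lt_floor_add_one u
      have := ht.2
      simp only [hA, mem_Ioc] at ht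
      linarith [ht.2]
  have hsplit : A = s₁ ∪ s₂ := by
    rw [hs₁, hs₂, ← inter_union_distrib_left, hcast]
    rw [show ((z:ℝ)+1+1) = (z:ℝ)+2 by ring, Ico_union_Ico_eq_Ico (by linarith) (by linarith)]
    exact (inter_eq_self_of_subset_left hsub).symm
  have hdisj : Disjoint s₁ s₂ := by
    apply Disjoint.mono inter_subset_right inter_subset_right
    rw [Set.Ico_disjoint_Ico, hcast]
    rw [min_le_iff]
    left
    rw [le_max_iff]
    right
    exact le_refl _
  have hint1 : IntegrableOn f s₁ volume := (integrableOn_f_Ico z).mono_set inter_subset_right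
  have hint2 : IntegrableOn f s₂ volume := (integrableOn_f_Ico (z+1)).mono_set inter_subset_right
  have hIoc : ∫ t in u..(u+δ), f t = ∫ t in A, f t := integral_of_le (by linarith)
  have hun : ∫ t in A, f t = (∫ t in s₁, f t) + ∫ t in s₂, f t := by
    rw [hsplit]
    exact setIntegral_union hdisj (measurableSet_Ioc.inter measurableSet_Ico) hint1 hint2
  have hp1 := piece_bound hδ hδ1 (u := u) z
  have hp2 := piece_bound hδ hδ1 (u := u) (z+1)
  have hvol : (volume s₁).toReal + (volume s₂).toReal ≤ δ := by
    have hA' : volume A = ENNReal.ofReal δ := by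
      rw [hA, Real.volume_Ioc]
      congr 1; ring
    have hsum : volume s₁ + volume s₂ = volume A := by
      rw [hsplit]
      exact (measure_union hdisj (measurableSet_Ioc.inter measurableSet_Ico)).symm
    have hne : volume s₁ + volume s₂ ≠ ⊤ := by
      rw [hsum, hA']
      exact ENNReal.ofReal_ne_top
    have hne1 : volume s₁ ≠ ⊤ := (ENNReal.add_ne_top.1 hne).1
    have hne2 : volume s₂ ≠ ⊤ := (ENNReal.add_ne_top.1 hne).2
    rw [← ENNReal.toReal_add hne1 hne2, hsum, hA', ENNReal.toReal_ofReal hδ.le]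
  rw [hIoc, hun]
  calc (∫ t in s₁, f t) + ∫ t in s₂, f t
      ≤ ((volume s₁).toReal + (δ + 2*Real.sqrt δ)) +
        ((volume s₂).toReal + (δ + 2*Real.sqrt δ)) := by
        exact add_le_add hp1 hp2
    _ ≤ 3*δ + 4*Real.sqrt δ := by linarith

lemma abs_int_eq (u v : ℝ) : ∫ t in u..v, |f t| = ∫ t in u..v, f t :=
  intervalIntegral.integral_congr (fun t _ => abs_of_nonneg (f_nonneg t))

lemma tendsto_sup :
    Tendsto (fun δ => ⨆ u : ℝ, ∫ t in u..(u + δ), |f t|)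
      (nhdsWithin 0 (Set.Ioi 0)) (nhds 0) := by
  have hmem : Ioc (0:ℝ) 1 ∈ nhdsWithin 0 (Set.Ioi 0) :=
    Ioc_mem_nhdsGT_of_mem (by norm_num : (0:ℝ) ∈ Ico (0:ℝ) 1)
  apply tendsto_of_tendsto_of_tendsto_of_le_of_le' (g := fun _ => (0:ℝ))
    (h := fun δ => 3*δ + 4*Real.sqrt δ)
  · exact tendsto_const_nhds
  · have h : Tendsto (fun δ : ℝ => 3*δ + 4*Real.sqrt δ) (nhds 0) (nhds 0) := by
      have hc : Continuous (fun δ : ℝ => 3*δ + 4*Real.sqrt δ) :=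
        (continuous_const.mul continuous_id).add (continuous_const.mul Real.continuous_sqrt)
      have := hc.tendsto 0
      simpa using this
    exact h.mono_left nhdsWithin_le_nhds
  · filter_upwards [hmem] with δ hδ
    have hbdd : BddAbove (range (fun u : ℝ => ∫ t in u..(u + δ), |f t|)) := by
      refine ⟨3*δ + 4*Real.sqrt δ, ?_⟩
      rintro x ⟨u, rfl⟩
      show ∫ t in u..(u + δ), |f t| ≤ _
      rw [abs_int_eq]
      exact mass_window hδ.1 hδ.2 u
    have h0 : (0:ℝ) ≤ ∫ t in (0:ℝ)..(0 + δ), |f t| := by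
      apply intervalIntegral.integral_nonneg (by linarith [hδ.1])
      intro t _
      exact abs_nonneg _
    exact le_trans h0 (le_ciSup hbdd 0)
  · filter_upwards [hmem] with δ hδ
    apply Real.iSup_le
    · intro u
      show ∫ t in u..(u + δ), |f t| ≤ _
      rw [abs_int_eq]
      exact mass_window hδ.1 hδ.2 u
    · nlinarith [Real.sqrt_nonneg δ, hδ.1.le]

def Cset (N : ℕ) : Set ℝ := {t | ⌊t⌋ ≠ 0 ∧ N ≤ nu ⌊t⌋ ∧ t ∈ Spk (nu ⌊t⌋)}

lemma Spk_shift_int (m : ℕ) (M : ℤ) (t : ℝ) : (t + (M:ℝ)) ∈ Spk m ↔ t ∈ Spk m := by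
  unfold Spk
  have h : (2:ℝ)^m * (t + (M:ℝ)) = 2^m * t + ((2^m * M : ℤ):ℝ) := by push_cast; ring
  simp only [Set.mem_setOf_eq, h, Int.fract_add_intCast]

lemma shift_eq {N : ℕ} {M : ℤ} (hM : (2:ℤ)^N ∣ M) {t : ℝ}
    (ht : t ∉ Cset N) (ht' : (t + (M:ℝ)) ∉ Cset N) : f (t + (M:ℝ)) = f t := by
  classical
  by_cases hM0 : M = 0
  · subst hM0; norm_num
  have hfl : ⌊t + (M:ℝ)⌋ = ⌊t⌋ + M := Int.floor_add_intCast t M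
  unfold f
  rw [hfl]
  simp only [Spk_shift_int]
  unfold Cset at ht ht'
  simp only [Set.mem_setOf_eq, hfl, not_and, Spk_shift_int] at ht ht'
  by_cases ha0 : ⌊t⌋ = 0
  · rw [ha0, zero_add] at ht' ⊢
    have hnuM : N ≤ nu M := (two_pow_dvd_iff hM0 N).1 hM
    have hnsp : t ∉ Spk (nu M) := ht' hM0 hnuM
    rw [if_neg (fun hc => hnsp hc.2), if_neg (by simp)]
  · by_cases haN : nu ⌊t⌋ < N
    · obtain ⟨hb0, hbeq⟩ := nu_add ha0 haN hM
      rw [hbeq]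
      by_cases hsp : t ∈ Spk (nu ⌊t⌋)
      · rw [if_pos ⟨hb0, hsp⟩, if_pos ⟨ha0, hsp⟩]
      · rw [if_neg (fun hc => hsp hc.2), if_neg (fun hc => hsp hc.2)]
    · push_neg at haN
      have hdvda : (2:ℤ)^N ∣ ⌊t⌋ := (two_pow_dvd_iff ha0 N).2 haN
      have hsp1 : t ∉ Spk (nu ⌊t⌋) := ht ha0 haN
      by_cases hb0 : ⌊t⌋ + M = 0
      · rw [if_neg (fun hc => hc.1 hb0), if_neg (fun hc => hsp1 hc.2)]
      · have hnub : N ≤ nu (⌊t⌋ + M) := (two_pow_dvd_iff hb0 N).1 (dvd_add hdvda hM)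
        have hsp2 : t ∉ Spk (nu (⌊t⌋+M)) := ht' hb0 hnub
        rw [if_neg (fun hc => hsp2 hc.2), if_neg (fun hc => hsp1 hc.2)]

lemma vol_Cset_Ico (N : ℕ) (y : ℤ) :
    volume (Cset N ∩ Set.Ico (y:ℝ) (y+1)) ≤ ENNReal.ofReal (((2:ℝ)^(N+1))⁻¹) := by
  by_cases hy : y ≠ 0 ∧ N ≤ nu y
  · have hsub : Cset N ∩ Set.Ico (y:ℝ) (y+1) ⊆ Spk (nu y) ∩ Set.Ico (y:ℝ) (y+1) := by
      rintro t ⟨htC, htI⟩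
      have hfl := floor_eq_self_int y htI
      exact ⟨by rw [← hfl]; exact htC.2.2, htI⟩
    apply le_trans (measure_mono hsub)
    rw [vol_Spk_Ico]
    apply ENNReal.ofReal_le_ofReal
    apply inv_anti₀ (by positivity)
    apply pow_le_pow_right₀ (by norm_num)
    omega
  · have hsub : Cset N ∩ Set.Ico (y:ℝ) (y+1) ⊆ ∅ := by
      rintro t ⟨htC, htI⟩
      have hfl := floor_eq_self_int y htI
      apply hy
      rw [← hfl]
      exact ⟨htC.1, htC.2.1⟩
    have h0 := measure_mono (μ := volume) hsub
    simp only [measure_empty, le_zero_iff] at h0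
    rw [h0]
    positivity

lemma vol_Cset_window (N : ℕ) (v : ℝ) :
    volume (Cset N ∩ Set.Icc v (v+1)) ≤ ENNReal.ofReal (2 * ((2:ℝ)^(N+1))⁻¹) := by
  have hsub : Cset N ∩ Set.Icc v (v+1) ⊆
      (Cset N ∩ Set.Ico ((⌊v⌋:ℝ)) (⌊v⌋+1)) ∪
      (Cset N ∩ Set.Ico ((⌊v⌋+1:ℤ):ℝ) ((⌊v⌋+1:ℤ)+1)) := by
    rintro t ⟨htC, htI⟩
    have h1 : (⌊v⌋:ℝ) ≤ t := le_trans (Int.floor_le v) htI.1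
    have h2 : t < (⌊v⌋:ℝ) + 2 := by
      have := Int.lt_floor_add_one v
      have := htI.2
      linarith
    by_cases hc : t < (⌊v⌋:ℝ) + 1
    · exact Or.inl ⟨htC, h1, hc⟩
    · push_neg at hc
      refine Or.inr ⟨htC, ?_, ?_⟩
      · push_cast; linarith
      · push_cast; linarith
  apply le_trans (measure_mono hsub)
  apply le_trans (measure_union_le _ _)
  have b1 := vol_Cset_Ico N ⌊v⌋
  have b2 := vol_Cset_Ico N (⌊v⌋+1)
  calc volume (Cset N ∩ Set.Ico ((⌊v⌋:ℝ)) (⌊v⌋+1)) +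
        volume (Cset N ∩ Set.Ico ((⌊v⌋+1:ℤ):ℝ) ((⌊v⌋+1:ℤ)+1))
      ≤ ENNReal.ofReal (((2:ℝ)^(N+1))⁻¹) + ENNReal.ofReal (((2:ℝ)^(N+1))⁻¹) :=
        add_le_add b1 b2
    _ = ENNReal.ofReal (2 * ((2:ℝ)^(N+1))⁻¹) := by
        rw [← ENNReal.ofReal_add (by positivity) (by positivity)]
        congr 1; ring

theorem muAP_f : MuAP f := by
  intro ε hε η hη
  obtain ⟨N, hN⟩ : ∃ N : ℕ, 4 * ((2:ℝ)^(N+1))⁻¹ ≤ ε := by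
    obtain ⟨N, hN⟩ := pow_unbounded_of_one_lt (4/ε) (by norm_num : (1:ℝ) < 2)
    refine ⟨N, ?_⟩
    have h2N : (0:ℝ) < 2^N := by positivity
    have h2N1 : (0:ℝ) < 2^(N+1) := by positivity
    have hlt : 4/ε < 2^(N+1) := by
      apply lt_of_lt_of_le hN
      apply pow_le_pow_right₀ (by norm_num); omega
    rw [div_lt_iff₀ hε] at hlt
    rw [mul_comm] at hlt
    have := (div_le_iff₀ h2N1).2 hlt.le
    calc 4 * ((2:ℝ)^(N+1))⁻¹ = 4/2^(N+1) := by ring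
      _ ≤ ε := by rw [div_le_iff₀ h2N1]; linarith
  refine ⟨2^(N+1), by positivity, fun x => ?_⟩
  set M : ℤ := 2^N * (⌊x/(2^N : ℝ)⌋ + 1) with hMdef
  have hMdvd : (2:ℤ)^N ∣ M := Dvd.intro _ rfl
  have h2N : (0:ℝ) < 2^N := by positivity
  have hMcast : (M:ℝ) = 2^N * ((⌊x/(2^N : ℝ)⌋:ℝ) + 1) := by
    rw [hMdef]
    push_cast
    ring
  have hx1 : x < (M:ℝ) := by
    rw [hMcast]
    have h := Int.lt_floor_add_one (x/(2^N:ℝ))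
    calc x = 2^N * (x/2^N) := by field_simp
      _ < 2^N * ((⌊x/(2^N : ℝ)⌋:ℝ) + 1) := by
          apply mul_lt_mul_of_pos_left h h2N
  have hx2 : (M:ℝ) < x + 2^(N+1) := by
    rw [hMcast]
    have h := Int.floor_le (x/(2^N:ℝ))
    have h1 : 2^N * ((⌊x/(2^N : ℝ)⌋:ℝ) + 1) ≤ 2^N * (x/2^N + 1) := by
      apply mul_le_mul_of_nonneg_left (by linarith) h2N.le
    have h2 : (2:ℝ)^N * (x/2^N + 1) = x + 2^N := by field_simp
    have h3 : (2:ℝ)^N < 2^(N+1) := by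
      rw [pow_succ]; nlinarith
    linarith
  refine ⟨(M:ℝ), ?_, hx1, hx2⟩
  show Dfun η (fun t => f (t + (M:ℝ))) f ≤ ε
  apply Real.iSup_le _ hε.le
  intro u
  set Bad := {t ∈ Set.Icc u (u + 1) | η ≤ |f (t + (M:ℝ)) - f t|} with hBad
  have hsub : Bad ⊆ (Cset N ∩ Set.Icc u (u+1)) ∪
      ((fun t => t + (M:ℝ)) ⁻¹' (Cset N ∩ Set.Icc (u + (M:ℝ)) ((u + (M:ℝ))+1))) := by
    rintro t ⟨htI, htη⟩
    by_cases hC : t ∈ Cset N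
    · exact Or.inl ⟨hC, htI⟩
    · by_cases hC' : (t + (M:ℝ)) ∈ Cset N
      · refine Or.inr ⟨hC', ?_, ?_⟩
        · simp only []
          linarith [htI.1]
        · simp only []
          linarith [htI.2]
      · exfalso
        rw [shift_eq hMdvd hC hC'] at htη
        simp at htη
        linarith
  have hb1 := vol_Cset_window N u
  have hb2 : volume ((fun t => t + (M:ℝ)) ⁻¹' (Cset N ∩ Set.Icc (u + (M:ℝ)) ((u + (M:ℝ))+1)))
      ≤ ENNReal.ofReal (2 * ((2:ℝ)^(N+1))⁻¹) := by
    rw [measure_preimage_add_right]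
    exact vol_Cset_window N (u + (M:ℝ))
  have hvol : volume Bad ≤ ENNReal.ofReal ε := by
    apply le_trans (measure_mono hsub)
    apply le_trans (measure_union_le _ _)
    calc _ ≤ ENNReal.ofReal (2 * ((2:ℝ)^(N+1))⁻¹) + ENNReal.ofReal (2 * ((2:ℝ)^(N+1))⁻¹) :=
          add_le_add hb1 hb2
      _ = ENNReal.ofReal (4 * ((2:ℝ)^(N+1))⁻¹) := by
          rw [← ENNReal.ofReal_add (by positivity) (by positivity)]
          congr 1; ring
      _ ≤ ENNReal.ofReal ε := ENNReal.ofReal_le_ofReal hN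
  exact ENNReal.toReal_le_of_le_ofReal hε.le hvol

theorem not_S1AP_f : ¬ S1AP f := by
  intro h
  obtain ⟨l, hl, hA⟩ := h 4⁻¹ (by norm_num)
  obtain ⟨K, hKl⟩ : ∃ K : ℕ, l + 2 < (2:ℝ)^K :=
    pow_unbounded_of_one_lt (l+2) (by norm_num : (1:ℝ) < 2)
  obtain ⟨τ, hτA, hτ1, hτ2⟩ := hA ((2:ℝ)^K)
  have hτA' : SNorm (fun u => f (u + τ) - f u) < 4⁻¹ := hτA
  have h2K : (1:ℝ) ≤ 2^K := one_le_pow₀ (by norm_num)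
  have hτub : τ < 2^(K+1) - 2 := by
    have : (2:ℝ)^(K+1) = 2 * 2^K := by rw [pow_succ]; ring
    rw [this]; linarith
  have hτlb : (2:ℝ)^K < τ := hτ1
  -- setup
  set m : ℕ := 2*K + 9 with hm
  set z : ℤ := 2^m with hz
  have hzcast : ((z:ℤ):ℝ) = (2:ℝ)^m := by rw [hz]; push_cast; ring
  have hnuz : nu z = m := nu_pow m
  have hz0 : z ≠ 0 := by rw [hz]; positivity
  set t₀ : ℝ := (2:ℝ)^m - τ with ht₀
  set S : Set ℝ := (fun u => u + τ) ⁻¹' (Spk m ∩ Set.Ico ((z:ℤ):ℝ) ((z:ℤ)+1)) with hS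
  have hSmeas : MeasurableSet S :=
    ((measurableSet_Spk m).inter measurableSet_Ico).preimage (measurable_id.add_const τ)
  have hvolS : volume S = ENNReal.ofReal (((2:ℝ)^(m+1))⁻¹) := by
    rw [hS, measure_preimage_add_right]
    exact vol_Spk_Ico m z
  have hSsub : S ⊆ Set.Icc t₀ (t₀+1) := by
    intro u hu
    have h2 : u + τ ∈ Set.Ico ((z:ℤ):ℝ) ((z:ℤ)+1) := hu.2
    rw [hzcast] at h2
    constructor
    · rw [ht₀]; linarith [h2.1]
    · rw [ht₀]; linarith [h2.2]
  have hSsub' : ∀ u ∈ S, t₀ ≤ u ∧ u < t₀ + 1 := by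
    intro u hu
    have h2 : u + τ ∈ Set.Ico ((z:ℤ):ℝ) ((z:ℤ)+1) := hu.2
    rw [hzcast] at h2
    constructor
    · rw [ht₀]; linarith [h2.1]
    · rw [ht₀]; linarith [h2.2]
  -- value of the shifted function on S
  have hfup : EqOn (fun u => f (u + τ)) (fun _ => 1 + (2:ℝ)^(m+1)) S := by
    intro u hu
    obtain ⟨h1, h2⟩ := hu
    show f (u + τ) = 1 + 2^(m+1)
    have hfl : ⌊u+τ⌋ = z := floor_eq_self_int z h2
    unfold f
    rw [hfl, hnuz]
    rw [if_pos ⟨hz0, h1⟩]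
  -- upper bound for f on S
  have hfdown : ∀ u ∈ S, f u ≤ 1 + (2:ℝ)^(K+2) := by
    intro u hu
    obtain ⟨hu1, hu2⟩ := hSsub' u hu
    set a : ℤ := ⌊u⌋ with hadef
    have ha1 : (a:ℝ) ≤ u := Int.floor_le u
    have ha2 : u - 1 < (a:ℝ) := by
      have := Int.lt_floor_add_one u
      linarith
    set j : ℤ := 2^m - a with hj
    have hjcast : (j:ℝ) = (2:ℝ)^m - (a:ℝ) := by rw [hj]; push_cast; ring
    have hjlb : (j:ℝ) > τ - 1 := by
      rw [hjcast]
      have : (a:ℝ) ≤ u := ha1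
      rw [ht₀] at hu2
      linarith
    have hjub : (j:ℝ) < τ + 1 := by
      rw [hjcast]
      rw [ht₀] at hu1
      linarith
    have hj1 : 0 < j := by
      have : (0:ℝ) < (j:ℝ) := by linarith
      exact_mod_cast this
    have hj2 : j < 2^(K+2) := by
      have hc : ((2^(K+2) : ℤ):ℝ) = (2:ℝ)^(K+2) := by push_cast; ring
      have h1 : (j:ℝ) < (2:ℝ)^(K+2) := by
        have e1 : (2:ℝ)^(K+2) = 4 * 2^K := by rw [pow_add]; ring
        have e2 : (2:ℝ)^(K+1) = 2 * 2^K := by rw [pow_succ]; ring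
        rw [e1]
        rw [e2] at hτub
        linarith
      rw [← hc] at h1
      exact_mod_cast h1
    have hjdvd : ¬ ((2:ℤ)^(K+2) ∣ j) := by
      intro hd
      have := Int.le_of_dvd hj1 hd
      omega
    have ha0 : a ≠ 0 := by
      have hKm : K + 2 ≤ m := by omega
      have : j < 2^m := lt_of_lt_of_le hj2 (by
        apply pow_le_pow_right₀ (by norm_num) hKm)
      intro h0
      rw [h0] at hj
      omega
    have hnua : nu a + 1 ≤ K + 2 := by
      by_contra hcon
      push_neg at hcon
      have hge : K + 2 ≤ nu a := by omega
      have hdvda : (2:ℤ)^(K+2) ∣ a := (two_pow_dvd_iff ha0 (K+2)).2 hge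
      have hdvdz : (2:ℤ)^(K+2) ∣ 2^m := pow_dvd_pow 2 (by omega)
      exact hjdvd (by rw [hj]; exact dvd_sub hdvdz hdvda)
    calc f u ≤ 1 + 2^(nu ⌊u⌋ + 1) := f_le_of_floor
      _ = 1 + 2^(nu a + 1) := by rw [← hadef]
      _ ≤ 1 + (2:ℝ)^(K+2) := by
          have : (2:ℝ)^(nu a + 1) ≤ 2^(K+2) := pow_le_pow_right₀ (by norm_num) hnua
          linarith
  -- integrability on S
  have hfin : volume S < ⊤ := by rw [hvolS]; exact ENNReal.ofReal_lt_top
  have hfS_int : IntegrableOn f S volume := (integrableOn_f_Icc t₀ (t₀+1)).mono_set hSsub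
  have hfτS_int : IntegrableOn (fun u => f (u + τ)) S volume := by
    apply IntegrableOn.congr_fun _ hfup.symm hSmeas
    exact integrableOn_const hfin.ne
  -- integral values
  have hvolS_toReal : (volume S).toReal = ((2:ℝ)^(m+1))⁻¹ := by
    rw [hvolS, ENNReal.toReal_ofReal (by positivity)]
  have hint_up : ∫ u in S, f (u + τ) = (1 + (2:ℝ)^(m+1)) * ((2:ℝ)^(m+1))⁻¹ := by
    rw [setIntegral_congr_fun hSmeas hfup, setIntegral_const, measureReal_def, hvolS_toReal, smul_eq_mul,
      mul_comm]
  have hint_down : ∫ u in S, f u ≤ (1 + (2:ℝ)^(K+2)) * ((2:ℝ)^(m+1))⁻¹ := by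
    have hconst : IntegrableOn (fun _ : ℝ => 1 + (2:ℝ)^(K+2)) S volume :=
      integrableOn_const hfin.ne
    have := setIntegral_mono_on hfS_int hconst hSmeas hfdown
    rwa [setIntegral_const, measureReal_def, hvolS_toReal, smul_eq_mul, mul_comm] at this
  -- chain of inequalities
  set g : ℝ → ℝ := fun u => f (u + τ) - f u with hg
  have hg_int : IntervalIntegrable g volume t₀ (t₀+1) :=
    (intervalIntegrable_f_shift τ t₀ (t₀+1)).sub (intervalIntegrable_f t₀ (t₀+1))
  have hIoc_int : IntegrableOn (fun u => |g u|) (Set.Ioc t₀ (t₀+1)) volume := by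
    have := hg_int.abs
    rwa [intervalIntegrable_iff_integrableOn_Ioc_of_le (by linarith)] at this
  have hgS_int : IntegrableOn g S volume := hfτS_int.sub hfS_int
  have step0 : (1:ℝ)/2 ≤ ∫ u in S, g u := by
    have heq : ∫ u in S, g u = (∫ u in S, f (u + τ)) - ∫ u in S, f u :=
      integral_sub hfτS_int hfS_int
    have hnum : (1 + (2:ℝ)^(m+1)) * ((2:ℝ)^(m+1))⁻¹ -
        (1 + (2:ℝ)^(K+2)) * ((2:ℝ)^(m+1))⁻¹ ≥ 1/2 := by
      have hfrac : (2:ℝ)^(K+2) * ((2:ℝ)^(m+1))⁻¹ ≤ 1/2 := by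
        have hKm : K + 3 ≤ m + 1 := by omega
        have h1 : (2:ℝ)^(K+3) ≤ 2^(m+1) := pow_le_pow_right₀ (by norm_num) hKm
        have h2 : ((2:ℝ)^(m+1))⁻¹ ≤ ((2:ℝ)^(K+3))⁻¹ := by
          apply inv_anti₀ (by positivity) h1
        have h3 : (2:ℝ)^(K+2) * ((2:ℝ)^(m+1))⁻¹ ≤ (2:ℝ)^(K+2) * ((2:ℝ)^(K+3))⁻¹ := by
          apply mul_le_mul_of_nonneg_left h2 (by positivity)
        have h4 : (2:ℝ)^(K+2) * ((2:ℝ)^(K+3))⁻¹ = 1/2 := by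
          rw [pow_succ (2:ℝ) (K+2), mul_inv]
          rw [← mul_assoc, mul_inv_cancel₀ (by positivity)]
          norm_num
        linarith
      have hexp : (1 + (2:ℝ)^(m+1)) * ((2:ℝ)^(m+1))⁻¹ -
          (1 + (2:ℝ)^(K+2)) * ((2:ℝ)^(m+1))⁻¹ =
          1 - (2:ℝ)^(K+2) * ((2:ℝ)^(m+1))⁻¹ := by
        field_simp
        ring
      rw [hexp]
      linarith
    rw [heq, hint_up]
    linarith [hint_down]
  have step3 : ∫ u in S, g u ≤ ∫ u in S, |g u| := by
    apply setIntegral_mono_on hgS_int hgS_int.abs hSmeas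
    intro u _
    exact le_abs_self _
  have step2 : ∫ u in S, |g u| ≤ ∫ u in Set.Ioc t₀ (t₀+1), |g u| := by
    apply setIntegral_mono_set hIoc_int
    · exact Filter.Eventually.of_forall (fun u => abs_nonneg _)
    · have h1 : S ≤ᶠ[ae volume] Set.Icc t₀ (t₀+1) :=
        (HasSubset.Subset.eventuallyLE hSsub)
      have h2 : Set.Icc t₀ (t₀+1) =ᶠ[ae volume] Set.Ioc t₀ (t₀+1) :=
        (MeasureTheory.Ioc_ae_eq_Icc).symm
      exact h1.trans h2.le
  have step1 : ∫ u in t₀..(t₀+1), |g u| = ∫ u in Set.Ioc t₀ (t₀+1), |g u| :=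
    integral_of_le (by linarith)
  have hSN : (1:ℝ)/2 ≤ SNorm g := by
    have hbdd : BddAbove (range (fun t : ℝ => ∫ u in t..(t + 1), |g u|)) := by
      refine ⟨8, ?_⟩
      rintro x ⟨t, rfl⟩
      exact Mbound τ t
    have hmem : ∫ u in t₀..(t₀ + 1), |g u| ≤ SNorm g := le_ciSup hbdd t₀
    have : (1:ℝ)/2 ≤ ∫ u in t₀..(t₀ + 1), |g u| := by
      rw [step1]
      linarith
    linarith
  rw [hg] at hSN
  have : (4:ℝ)⁻¹ < 1/2 := by norm_num
  linarith

end Stmt19Aux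

theorem stmt19 :
    ∃ f : ℝ → ℝ, LocallyIntegrable f volume ∧ MuAP f ∧
      Tendsto (fun δ => ⨆ u : ℝ, ∫ t in u..(u + δ), |f t|)
        (nhdsWithin 0 (Set.Ioi 0)) (nhds 0) ∧
      ¬ S1AP f :=
  ⟨Stmt19Aux.f, Stmt19Aux.locallyIntegrable_f, Stmt19Aux.muAP_f, Stmt19Aux.tendsto_sup,
    Stmt19Aux.not_S1AP_f⟩
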